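/- Suppose a partial coloring of a k-uniform hypergraph satisfies: (i) every edge has at most s missing colors, and (ii) for every vertex v there do not exist z distinct edges f_1,…,f_z containing v and z distinct colors c_1,…,c_z with c_i missing from f_i for every i. Then for every vertex v, the union S(v) = ⋃_{f ∋ v} M(f) of missing-color sets over edges containing v has |S(v)| ≤ s(z-1). -/
import Mathlib


open Finset

/-- If (i) every edge has at most s missing colors and (ii) there is no 'rainbow system'
of z distinct edges through v each missing a distinct color, then the union of the
missing-color sets over edges containing v has size at most s(z-1). -/
theorem stmt11 {V : Type*} [Fintype V] [DecidableEq V] (t s z : ℕ) (hz : 1 ≤ z)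
    (H : Finset (Finset V)) (M : Finset V → Finset (Fin t))
    (hM : ∀ f ∈ H, (M f).card ≤ s)
    (hnorainbow : ∀ v : V, ¬ ∃ (f : Fin z → Finset V) (c : Fin z → Fin t),
      Function.Injective f ∧ Function.Injective c ∧
      ∀ i, f i ∈ H ∧ v ∈ f i ∧ c i ∈ M (f i)) :
    ∀ v : V, ((H.filter (fun f => v ∈ f)).biUnion M).card ≤ s * (z - 1) := by
  classical
  intro v
  set T := H.filter (fun f => v ∈ f) with hT
  -- matchings: sets of pairs (edge, color) with distinct edges and distinct colors
  set good : Finset (Finset V × Fin t) → Prop := fun P =>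
    (∀ p ∈ P, p.1 ∈ H ∧ v ∈ p.1 ∧ p.2 ∈ M p.1) ∧
    Set.InjOn Prod.fst (P : Set (Finset V × Fin t)) ∧
    Set.InjOn Prod.snd (P : Set (Finset V × Fin t)) with hgood
  set PP := (T ×ˢ (Finset.univ : Finset (Fin t))).powerset.filter good with hPP
  have hempty : (∅ : Finset (Finset V × Fin t)) ∈ PP := by
    simp [hPP, hgood, good]
  obtain ⟨P, hPPP, hPmax⟩ := Finset.exists_max_image PP Finset.card ⟨∅, hempty⟩
  obtain ⟨hPsub, hPgood⟩ := Finset.mem_filter.mp hPPP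
  obtain ⟨hPmem, hPinj1, hPinj2⟩ := hPgood
  -- P has at most z-1 elements
  have hPz : P.card < z := by
    by_contra hle
    push_neg at hle
    apply hnorainbow v
    have e : Fin P.card ≃ {x // x ∈ P} := P.equivFin.symm
    refine ⟨fun i => (e (Fin.castLE hle i)).1.1, fun i => (e (Fin.castLE hle i)).1.2, ?_, ?_, ?_⟩
    · intro i j hij
      have := hPinj1 (e (Fin.castLE hle i)).2 (e (Fin.castLE hle j)).2 hij
      have := e.injective (Subtype.ext this)
      exact Fin.castLE_injective hle this
    · intro i j hij
      have := hPinj2 (e (Fin.castLE hle i)).2 (e (Fin.castLE hle j)).2 hij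
      have := e.injective (Subtype.ext this)
      exact Fin.castLE_injective hle this
    · intro i
      exact hPmem _ (e (Fin.castLE hle i)).2
  -- every color in the union appears in M of some matched edge
  have hsub : T.biUnion M ⊆ P.biUnion (fun p => M p.1) := by
    intro c hc
    obtain ⟨f, hfT, hcf⟩ := Finset.mem_biUnion.mp hc
    obtain ⟨hfH, hvf⟩ := Finset.mem_filter.mp hfT
    by_cases h1 : ∃ p ∈ P, p.2 = c
    · obtain ⟨p, hp, hpc⟩ := h1
      exact Finset.mem_biUnion.mpr ⟨p, hp, hpc ▸ (hPmem p hp).2.2⟩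
    by_cases h2 : ∃ p ∈ P, p.1 = f
    · obtain ⟨p, hp, hpf⟩ := h2
      exact Finset.mem_biUnion.mpr ⟨p, hp, hpf ▸ hcf⟩
    -- otherwise extend P, contradicting maximality
    exfalso
    push_neg at h1 h2
    have hnotmem : (f, c) ∉ P := fun h => h2 _ h rfl
    have hQ : insert (f, c) P ∈ PP := by
      refine Finset.mem_filter.mpr ⟨?_, ?_, ?_, ?_⟩
      · rw [Finset.mem_powerset] at hPsub ⊢
        refine Finset.insert_subset ?_ hPsub
        exact Finset.mem_product.mpr ⟨hfT, Finset.mem_univ _⟩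
      · intro p hp
        rcases Finset.mem_insert.mp hp with h | h
        · subst h; exact ⟨hfH, hvf, hcf⟩
        · exact hPmem p h
      · intro p hp q hq hpq
        simp only [Finset.coe_insert, Set.mem_insert_iff] at hp hq
        rcases hp with rfl | hp <;> rcases hq with rfl | hq
        · rfl
        · exact absurd hpq.symm (fun h => h2 _ hq h)
        · exact absurd hpq (fun h => h2 _ hp h)
        · exact hPinj1 hp hq hpq
      · intro p hp q hq hpq
        simp only [Finset.coe_insert, Set.mem_insert_iff] at hp hq
        rcases hp with rfl | hp <;> rcases hq with rfl | hq
        · rfl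
        · exact absurd hpq.symm (fun h => h1 _ hq h)
        · exact absurd hpq (fun h => h1 _ hp h)
        · exact hPinj2 hp hq hpq
    have := hPmax _ hQ
    rw [Finset.card_insert_of_notMem hnotmem] at this
    omega
  calc (T.biUnion M).card ≤ (P.biUnion (fun p => M p.1)).card := Finset.card_le_card hsub
    _ ≤ ∑ p ∈ P, (M p.1).card := Finset.card_biUnion_le
    _ ≤ ∑ _p ∈ P, s := Finset.sum_le_sum (fun p hp => hM _ (hPmem p hp).1)
    _ = P.card * s := by rw [Finset.sum_const, smul_eq_mul]
    _ ≤ (z - 1) * s := Nat.mul_le_mul_right s (by omega)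
    _ = s * (z - 1) := Nat.mul_comm _ _
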